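/- For every integer d ≥ 6, every real a ∈ [1/4, 1/2), and every integer s with d^a ≤ s ≤ d, setting ρ² = (1/2 − a)·log(1 + d(log d)/s²), one has (1 + (s/d)(e^{ρ²} − 1))^s ≤ d^{1/2 − a}. -/

import Mathlib

/-- Inequality (20): for `d ≥ 6`, `a ∈ [1/4, 1/2)`, `d^a ≤ s ≤ d` and
`ρ² = (1/2 - a) log(1 + d (log d)/s²)`, one has `(1 + (s/d)(e^{ρ²} - 1))^s ≤ d^{1/2 - a}`. -/
theorem chi_square_divergence_bound (d : ℕ) (hd : 6 ≤ d) (a : ℝ)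
    (ha1 : 1 / 4 ≤ a) (ha2 : a < 1 / 2) (s : ℕ)
    (hs1 : (d : ℝ) ^ a ≤ (s : ℝ)) (hs2 : s ≤ d) :
    (1 + (s : ℝ) / (d : ℝ) *
        (Real.exp ((1 / 2 - a) * Real.log (1 + (d : ℝ) * Real.log d / (s : ℝ) ^ 2)) - 1)) ^ s
      ≤ (d : ℝ) ^ (1 / 2 - a) := by
  have hd1 : (1 : ℝ) < d := by exact_mod_cast Nat.lt_of_lt_of_le (by norm_num) hd
  have hd0 : (0 : ℝ) < d := lt_trans one_pos hd1
  have hsr1 : (1 : ℝ) ≤ (s : ℝ) := le_trans (Real.one_le_rpow hd1.le (by linarith)) hs1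
  have hs0 : (0 : ℝ) < s := lt_of_lt_of_le one_pos hsr1
  have hlogd : 0 < Real.log d := Real.log_pos hd1
  set b : ℝ := 1 / 2 - a with hb
  have hb0 : 0 < b := by simp [hb]; linarith
  have hb1 : b ≤ 1 := by simp [hb]; linarith
  set x : ℝ := (d : ℝ) * Real.log d / (s : ℝ) ^ 2 with hx
  have hx0 : 0 < x := by positivity
  -- exp(b * log(1+x)) = (1+x)^b
  have hexp : Real.exp (b * Real.log (1 + x)) = (1 + x) ^ b := by
    rw [Real.rpow_def_of_pos (by linarith), mul_comm]
  -- Bernoulli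
  have hbern : (1 + x) ^ b ≤ 1 + b * x :=
    rpow_one_add_le_one_add_mul_self (by linarith) hb0.le hb1
  -- base bound
  have hbase : 1 + (s : ℝ) / (d : ℝ) *
      (Real.exp (b * Real.log (1 + x)) - 1) ≤ 1 + b * Real.log d / s := by
    rw [hexp]
    have h1 : (s : ℝ) / d * ((1 + x) ^ b - 1) ≤ (s : ℝ) / d * (b * x) := by
      apply mul_le_mul_of_nonneg_left (by linarith) (by positivity)
    have h2 : (s : ℝ) / d * (b * x) = b * Real.log d / s := by
      rw [hx]; field_simp
    linarith
  have hbase0 : (0 : ℝ) < 1 + (s : ℝ) / (d : ℝ) *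
      (Real.exp (b * Real.log (1 + x)) - 1) := by
    have : (1 : ℝ) ≤ (1 + x) ^ b := Real.one_le_rpow (by linarith) hb0.le
    rw [hexp]
    have : 0 ≤ (s : ℝ) / d * ((1 + x) ^ b - 1) := by
      apply mul_nonneg (by positivity); linarith
    linarith
  calc (1 + (s : ℝ) / (d : ℝ) * (Real.exp (b * Real.log (1 + x)) - 1)) ^ s
      ≤ (1 + b * Real.log d / s) ^ s := by
        apply pow_le_pow_left₀ hbase0.le hbase
    _ ≤ (Real.exp (b * Real.log d / s)) ^ s := by
        apply pow_le_pow_left₀ (by positivity)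
        have := Real.add_one_le_exp (b * Real.log d / s)
        linarith
    _ = Real.exp (b * Real.log d / s * s) := by
        rw [← Real.exp_nat_mul]; ring_nf
    _ = Real.exp (b * Real.log d) := by
        congr 1; field_simp
    _ = (d : ℝ) ^ b := by rw [Real.rpow_def_of_pos hd0, mul_comm]
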